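/- Let T be a type with a partial order such that: for every t ∈ T the set of strict predecessors {s : s < t} is linearly ordered and well-founded (so T is a tree, and each t has an ordinal level, the order type of {s : s < t}); every chain in T is countable; every level T_α = {t : the level of t is α} is countable; and T is uncountable. Let σT be the set of all P ∈ {0,1}^T that are characteristic functions of subsets of T which are both chains and lower sets (if t is in the set and s ≤ t then s is in the set), with the subspace topology from the Cantor cube {0,1}^T. Then σT is a closed (hence compact) subset of {0,1}^T; for every α < ω₁ the set K_α = {P ∈ σT : P meets no element of T_α} is a closed Gδ subset of σT; the union of the K_α over α < ω₁ is σT; and no countable subfamily of {K_α : α < ω₁} has union σT. -/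

import Mathlib

open Set

/-- An index type of cardinality `ℵ₁`: the countable ordinals. -/
abbrev Omega1Index : Type 1 := {o : Ordinal // o < Ordinal.omega 1}

/-- The level of a node `t` of a tree: the order type of its set of strict predecessors,
which is assumed (via `hwo`) to be well-ordered by the tree order. -/
noncomputable def treeLevel {T : Type} [PartialOrder T]
    (hwo : ∀ t : T, IsWellOrder {s : T // s < t} (fun a b => a.val < b.val)) (t : T) :
    Ordinal :=
  @Ordinal.type {s : T // s < t} (fun a b => a.val < b.val) (hwo t)

/-- The path space `σT` of a tree `T`, viewed inside the Cantor cube `{0,1}^T`: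
characteristic functions of subsets of `T` that are chains and lower sets. -/
def pathSpace (T : Type) [PartialOrder T] : Set (T → Bool) :=
  {P : T → Bool | IsChain (· ≤ ·) {t : T | P t = true} ∧
    ∀ s t : T, P t = true → s ≤ t → P s = true}

/-- `K_α`: the set of paths that meet no node of level `α`. -/
def pathsMissingLevel {T : Type} [PartialOrder T]
    (hwo : ∀ t : T, IsWellOrder {s : T // s < t} (fun a b => a.val < b.val))
    (α : Omega1Index) : Set (pathSpace T) :=
  {P : pathSpace T | ∀ t : T, treeLevel hwo t = α.val → P.val t = false}

section Aux

open Cardinal Ordinal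

-- countability of initial segments below ω₁
lemma aux_countable_Iio {o : Ordinal} (h : o < Ordinal.omega 1) : (Set.Iio o).Countable := by
  rw [countable_iff_lt_aleph_one, Ordinal.mk_Iio_ordinal, Cardinal.lift_lt_aleph_one]
  rw [← Cardinal.ord_aleph] at h
  exact Cardinal.lt_ord.mp h

lemma aux_countable_Iic {o : Ordinal} (h : o < Ordinal.omega 1) : (Set.Iic o).Countable := by
  rw [← Set.Iio_union_right]
  exact (aux_countable_Iio h).union (Set.countable_singleton o)

lemma aux_uncountable_Iio : ¬ (Set.Iio (Ordinal.omega 1)).Countable := by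
  rw [countable_iff_lt_aleph_one, Ordinal.mk_Iio_ordinal]
  rw [← Cardinal.ord_aleph, Cardinal.card_ord, Cardinal.lift_lt_aleph_one]
  exact lt_irrefl _

-- clopen-ness of coordinate sets
lemma aux_clopen (T : Type) (t : T) (b : Bool) : IsClopen {P : T → Bool | P t = b} := by
  have : {P : T → Bool | P t = b} = (fun P : T → Bool => P t) ⁻¹' {b} := rfl
  rw [this]
  exact (isClopen_discrete {b}).preimage (continuous_apply t)

-- key tree lemma: level of a predecessor equals its typein
lemma treeLevel_eq_typein {T : Type} [PartialOrder T]
    (hwo : ∀ t : T, IsWellOrder {s : T // s < t} (fun a b => a.val < b.val))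
    (t : T) (x : {s : T // s < t}) :
    treeLevel hwo x.val =
      @Ordinal.typein {s : T // s < t} (fun a b => a.val < b.val) (hwo t) x := by
  letI := hwo t
  rw [← Ordinal.type_subrel]
  unfold treeLevel
  refine RelIso.ordinal_type_eq ?_
  exact ⟨⟨fun u => ⟨⟨u.val, u.prop.trans x.prop⟩, u.prop⟩,
    fun v => ⟨v.val.val, v.prop⟩, fun u => rfl, fun v => rfl⟩, Iff.rfl⟩

end Aux

/-- For an Aronszajn tree `T` (strict predecessors of each node form a well-ordered chain,
all chains are countable, all levels are countable, `T` is uncountable), the path space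
`σT` is a closed subset of the Cantor cube `{0,1}^T`, each `K_α` (paths missing level `α`)
is a closed `Gδ` subset of `σT`, the sets `K_α` for `α < ω₁` cover `σT`, and no countable
subfamily of them covers `σT`. -/
theorem pathSpace_of_aronszajn_tree
    (T : Type) [PartialOrder T]
    (hwo : ∀ t : T, IsWellOrder {s : T // s < t} (fun a b => a.val < b.val))
    (hchain : ∀ c : Set T, IsChain (· ≤ ·) c → c.Countable)
    (hlevel : ∀ α : Ordinal, {t : T | treeLevel hwo t = α}.Countable)
    (hunc : ¬ (Set.univ : Set T).Countable) :
    IsClosed (pathSpace T) ∧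
    (∀ α : Omega1Index, IsClosed (pathsMissingLevel hwo α) ∧
      IsGδ (pathsMissingLevel hwo α)) ∧
    (⋃ α : Omega1Index, pathsMissingLevel hwo α) = Set.univ ∧
    ¬ ∃ C : Set Omega1Index, C.Countable ∧
        (⋃ α ∈ C, pathsMissingLevel hwo α) = Set.univ := by

  classical
  constructor
  · -- pathSpace is closed
    have key : pathSpace T =
        (⋂ (a : T) (b : T), {P : T → Bool | P a = true → P b = true →
          (a ≠ b → a ≤ b ∨ b ≤ a)}) ∩
        (⋂ (s : T) (t : T), {P : T → Bool | P t = true → s ≤ t → P s = true}) := by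
      ext P
      constructor
      · rintro ⟨h1, h2⟩
        refine ⟨?_, ?_⟩
        · simp only [Set.mem_iInter, Set.mem_setOf_eq]
          intro a b ha hb hab
          exact h1 ha hb hab
        · simp only [Set.mem_iInter, Set.mem_setOf_eq]
          intro s t ht hst
          exact h2 s t ht hst
      · rintro ⟨h1, h2⟩
        simp only [Set.mem_iInter, Set.mem_setOf_eq] at h1 h2
        exact ⟨fun a ha b hb hab => h1 a b ha hb hab, h2⟩
    rw [key]
    apply IsClosed.inter
    · apply isClosed_iInter; intro a; apply isClosed_iInter; intro b
      by_cases q : a ≠ b → a ≤ b ∨ b ≤ a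
      · have : {P : T → Bool | P a = true → P b = true → (a ≠ b → a ≤ b ∨ b ≤ a)} =
            Set.univ := by
          ext P
          simp only [Set.mem_setOf_eq, Set.mem_univ, iff_true]
          exact fun _ _ => q
        rw [this]; exact isClosed_univ
      · have : {P : T → Bool | P a = true → P b = true → (a ≠ b → a ≤ b ∨ b ≤ a)} =
            {P : T → Bool | P a = true}ᶜ ∪ {P : T → Bool | P b = true}ᶜ := by
          ext P; simp only [Set.mem_setOf_eq, Set.mem_union, Set.mem_compl_iff]; tauto
        rw [this]
        exact ((aux_clopen T a true).isOpen.isClosed_compl).union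
          ((aux_clopen T b true).isOpen.isClosed_compl)
    · apply isClosed_iInter; intro s; apply isClosed_iInter; intro t
      by_cases q : s ≤ t
      · have : {P : T → Bool | P t = true → s ≤ t → P s = true} =
            {P : T → Bool | P t = true}ᶜ ∪ {P : T → Bool | P s = true} := by
          ext P; simp only [Set.mem_setOf_eq, Set.mem_union, Set.mem_compl_iff]; tauto
        rw [this]
        exact ((aux_clopen T t true).isOpen.isClosed_compl).union (aux_clopen T s true).isClosed
      · have : {P : T → Bool | P t = true → s ≤ t → P s = true} = Set.univ := by
          ext P; simp [q]
        rw [this]; exact isClosed_univ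
  have hcoord : ∀ (t : T) (b : Bool), IsClopen {P : pathSpace T | P.val t = b} := by
    intro t b
    have : {P : pathSpace T | P.val t = b} =
        (fun P : pathSpace T => P.val t) ⁻¹' {b} := rfl
    rw [this]
    exact (isClopen_discrete {b}).preimage ((continuous_apply t).comp continuous_subtype_val)
  refine ⟨?_, ?_, ?_⟩
  · -- each K_α is closed and Gδ
    intro α
    constructor
    · have key : pathsMissingLevel hwo α =
          ⋂ t : T, {P : pathSpace T | treeLevel hwo t = α.val → P.val t = false} := by
        ext P; simp [pathsMissingLevel]
      rw [key]
      apply isClosed_iInter; intro t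
      by_cases q : treeLevel hwo t = α.val
      · have : {P : pathSpace T | treeLevel hwo t = α.val → P.val t = false} =
            {P : pathSpace T | P.val t = false} := by ext P; simp [q]
        rw [this]; exact (hcoord t false).isClosed
      · have : {P : pathSpace T | treeLevel hwo t = α.val → P.val t = false} =
            Set.univ := by ext P; simp [q]
        rw [this]; exact isClosed_univ
    · have key : pathsMissingLevel hwo α =
          ⋂ t ∈ {t : T | treeLevel hwo t = α.val}, {P : pathSpace T | P.val t = false} := by
        ext P
        simp [pathsMissingLevel]
      rw [key]
      exact IsGδ.biInter (hlevel α.val) (fun t _ => (hcoord t false).isOpen.isGδ)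
  · -- union covers
    rw [Set.eq_univ_iff_forall]
    intro P
    rw [Set.mem_iUnion]
    have hA : (treeLevel hwo '' {t : T | P.val t = true}).Countable :=
      (hchain _ P.2.1).image _
    have hne : (Set.Iio (Ordinal.omega 1) \ treeLevel hwo '' {t : T | P.val t = true}).Nonempty := by
      rw [Set.nonempty_iff_ne_empty]
      intro h
      apply aux_uncountable_Iio
      have : Set.Iio (Ordinal.omega 1) ⊆ treeLevel hwo '' {t : T | P.val t = true} := by
        intro x hx
        by_contra hx'
        exact Set.eq_empty_iff_forall_notMem.mp h x ⟨hx, hx'⟩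
      exact hA.mono this
    obtain ⟨o, ho1, ho2⟩ := hne
    refine ⟨⟨o, ho1⟩, ?_⟩
    intro t ht
    by_contra hf
    rw [Bool.not_eq_false] at hf
    exact ho2 ⟨t, hf, ht⟩
  · -- no countable subcover
    rintro ⟨C, hC, hcov⟩
    set S : Set T := ⋃ α ∈ C, ⋃ β ∈ Set.Iic α.val, {t : T | treeLevel hwo t = β} with hS
    have hScount : S.Countable :=
      hC.biUnion fun α _ => (aux_countable_Iic α.prop).biUnion fun β _ => hlevel β
    have ht : ∃ t : T, t ∉ S := by
      by_contra h
      push_neg at h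
      exact hunc (hScount.mono fun t _ => h t)
    obtain ⟨t, htS⟩ := ht
    -- the branch through t
    set P : T → Bool := fun s => decide (s ≤ t) with hPdef
    have hPmem : P ∈ pathSpace T := by
      constructor
      · intro a ha b hb hab
        simp only [Set.mem_setOf_eq, hPdef, decide_eq_true_eq] at ha hb
        rcases eq_or_lt_of_le ha with h1 | h1
        · right; exact h1 ▸ hb
        rcases eq_or_lt_of_le hb with h2 | h2
        · left; exact h2 ▸ ha
        letI := hwo t
        rcases trichotomous_of (fun a b : {s : T // s < t} => a.val < b.val)
          ⟨a, h1⟩ ⟨b, h2⟩ with h | h | h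
        · exact Or.inl h.le
        · exact absurd (congrArg Subtype.val h) hab
        · exact Or.inr h.le
      · intro s u hu hsu
        simp only [hPdef, decide_eq_true_eq] at hu ⊢
        exact hsu.trans hu
    have : (⟨P, hPmem⟩ : pathSpace T) ∈ ⋃ α ∈ C, pathsMissingLevel hwo α := by
      rw [hcov]; trivial
    obtain ⟨α, hαC, hα⟩ := Set.mem_iUnion₂.mp this
    -- t has level above α
    have hlt : α.val < treeLevel hwo t := by
      by_contra h
      push_neg at h
      exact htS (Set.mem_biUnion hαC (Set.mem_biUnion h rfl))
    letI := hwo t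
    obtain ⟨x, hx⟩ := Ordinal.typein_surj (fun a b : {s : T // s < t} => a.val < b.val) hlt
    have hxl : treeLevel hwo x.val = α.val := (treeLevel_eq_typein hwo t x).trans hx
    have := hα x.val hxl
    simp only [hPdef, decide_eq_false_iff_not] at this
    exact this x.prop.le
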